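/- For any p/q ∈ ℚ (written with p ≥ 0, gcd(p,q) = 1) such that |p/q| > 1, exactly one of the two rationals p/q and p/(q − sgn(q)·p) admits a positive continued fraction expansion; that is, p/q has a positive continued fraction expansion if and only if p/(q − sgn(q)·p) does not. -/
import Mathlib


open scoped BigOperators

/-- Continued fraction value in `ℚ ∪ {∞}`, with `none` playing the role of `∞ = 1/0`.
`[ ] = ∞`, and `[c₁,…,cₙ] = c₁ + 1/[c₂,…,cₙ]` with `x + ∞ = ∞` and `1/∞ = 0`. -/
def cfVal : List ℤ → Option ℚ
  | [] => none
  | c :: cs =>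
    match cfVal cs with
    | none => some (c : ℚ)
    | some x => if x = 0 then none else some ((c : ℚ) + 1 / x)

/-- A continued fraction is positive if every term is at least 1. -/
def PosCF (L : List ℤ) : Prop := ∀ a ∈ L, 1 ≤ a

/-- A continued fraction is even if every term is even and nonzero. -/
def EvenCF (L : List ℤ) : Prop := ∀ b ∈ L, 2 ∣ b ∧ b ≠ 0

/-- Writing `y = p/q` with `p ≥ 0` and `gcd(p,q) = 1`, the rational `p/(q − sgn(q)·p)`. -/
def twist (y : ℚ) : ℚ :=
  ((y.num.natAbs : ℤ) : ℚ) /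
    (((y.num.sign * (y.den : ℤ)) - (y.num.sign * (y.den : ℤ)).sign * (y.num.natAbs : ℤ) : ℤ) : ℚ)

/-- The map `p/q ↦ p/(q − sgn(q)·p)` on `ℚ ∪ {∞}` (with `∞ = 1/0`). -/
def twistO : Option ℚ → Option ℚ
  | none => none
  | some y =>
    if (y.num.sign * (y.den : ℤ)) - (y.num.sign * (y.den : ℤ)).sign * (y.num.natAbs : ℤ) = 0
    then none
    else some (((y.num.natAbs : ℤ) : ℚ) /
      (((y.num.sign * (y.den : ℤ)) - (y.num.sign * (y.den : ℤ)).sign * (y.num.natAbs : ℤ) : ℤ) : ℚ))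

/-- The map `p/q ↦ p/(q + p)` on `ℚ ∪ {∞}` (with `∞ = 1/0`, so `∞ = 1/0 ↦ 1/1 = 1`). -/
def pqPlus : Option ℚ → Option ℚ
  | none => some 1
  | some y =>
    if (y.num.sign * (y.den : ℤ)) + (y.num.natAbs : ℤ) = 0 then none
    else some (((y.num.natAbs : ℤ) : ℚ) /
      (((y.num.sign * (y.den : ℤ)) + (y.num.natAbs : ℤ) : ℤ) : ℚ))

lemma posCF_ge_one : ∀ L : List ℤ, PosCF L → ∀ x : ℚ, cfVal L = some x → 1 ≤ x := by
  intro L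
  induction L with
  | nil => intro _ x h; simp [cfVal] at h
  | cons c cs ih =>
    intro hpos x h
    have hc : (1:ℚ) ≤ (c:ℚ) := by exact_mod_cast hpos c (by simp)
    have hpos' : PosCF cs := fun a ha => hpos a (by simp [ha])
    unfold cfVal at h
    cases hcs : cfVal cs with
    | none => rw [hcs] at h; simp at h; linarith [h.symm ▸ hc]
    | some y =>
      rw [hcs] at h
      have hy : 1 ≤ y := ih hpos' y hcs
      have hy0 : y ≠ 0 := by linarith
      simp [hy0] at h
      have h1 : 0 < y⁻¹ := by positivity
      rw [← h]
      linarith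

lemma exists_posCF : ∀ n : ℕ, ∀ x : ℚ, x.den ≤ n → 1 ≤ x → ∃ L, PosCF L ∧ cfVal L = some x := by
  intro n
  induction n with
  | zero => intro x hd _; exact absurd hd (by have := x.den_pos; omega)
  | succ n ih =>
    intro x hd hx
    by_cases hden : x.den = 1
    · refine ⟨[x.num], ?_, ?_⟩
      · intro a ha; simp at ha; subst ha
        have : (1:ℚ) ≤ (x.num : ℚ) := by
          rw [show ((x.num:ℚ)) = x by rw [← Rat.num_div_den x, hden]; simp]
          exact hx
        exact_mod_cast this
      · simp only [cfVal]
        congr 1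
        rw [← Rat.num_div_den x, hden]; simp
    · set r := x - (⌊x⌋ : ℚ) with hr
      have hr0 : 0 < r := by
        have := Int.fract_nonneg x
        rw [Int.fract] at this
        rcases lt_or_eq_of_le this with h | h
        · exact h
        · exfalso
          have : x = (⌊x⌋ : ℚ) := by linarith
          apply hden
          rw [this]; exact Rat.den_intCast _
      have hr1 : r < 1 := by
        have := Int.fract_lt_one x
        rwa [Int.fract] at this
      have hrden : r.den ∣ x.den := by
        have := Rat.add_den_dvd x (-(⌊x⌋:ℚ))
        simpa [hr, sub_eq_add_neg] using this
      have hrnum : 0 < r.num := Rat.num_pos.mpr hr0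
      have key : r * (r.den : ℚ) = (r.num : ℚ) := by
        have hne : ((r.den:ℚ)) ≠ 0 := by
          have : (0:ℚ) < (r.den:ℚ) := by exact_mod_cast r.den_pos
          linarith
        nth_rewrite 1 [← Rat.num_div_den r]
        exact div_mul_cancel₀ _ hne
      have hnumlt : r.num < (r.den : ℤ) := by
        have h2 : (r.num : ℚ) < (r.den : ℚ) := by
          rw [← key]
          have hd : (0:ℚ) < (r.den:ℚ) := by exact_mod_cast r.den_pos
          nlinarith
        exact_mod_cast h2
      -- inverse
      have hinv : r⁻¹ = ((r.den : ℤ) : ℚ) / ((r.num : ℤ) : ℚ) := by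
        have hn : ((r.num : ℚ)) ≠ 0 := by exact_mod_cast hrnum.ne'
        rw [eq_div_iff hn, inv_mul_eq_div, div_eq_iff hr0.ne']
        push_cast
        linarith [key]
      have hinvden : (r⁻¹).den ≤ r.num.natAbs := by
        have hdvd : ((r⁻¹).den : ℤ) ∣ r.num := by
          rw [hinv, ← Rat.divInt_eq_div]; exact Rat.den_dvd _ _
        have := Int.le_of_dvd hrnum hdvd
        omega
      have hinvden' : (r⁻¹).den ≤ n := by
        have h1 : r.num.natAbs < r.den := by omega
        have h2 : r.den ≤ x.den := Nat.le_of_dvd x.den_pos hrden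
        omega
      have hinvge : 1 ≤ r⁻¹ := one_le_inv_iff₀.mpr ⟨hr0, le_of_lt hr1⟩
      obtain ⟨L, hL, hLv⟩ := ih r⁻¹ hinvden' hinvge
      refine ⟨⌊x⌋ :: L, ?_, ?_⟩
      · intro a ha
        rcases List.mem_cons.mp ha with h | h
        · subst h; exact Int.le_floor.mpr (by exact_mod_cast hx)
        · exact hL a h
      · simp only [cfVal, hLv]
        have : r⁻¹ ≠ 0 := by positivity
        rw [if_neg this]
        congr 1
        rw [one_div, inv_inv, hr]
        ring

/-- For `p/q ∈ ℚ` with `|p/q| > 1`, exactly one of `p/q` and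
`p/(q − sgn(q)·p)` admits a positive continued fraction expansion. -/
theorem positive_cf_iff_not_twist (x : ℚ) (hx : 1 < |x|) :
    (∃ L : List ℤ, PosCF L ∧ cfVal L = some x) ↔
      ¬ ∃ L : List ℤ, PosCF L ∧ cfVal L = some (twist x) := by
  have hd0 : (0:ℚ) < (x.den:ℚ) := by exact_mod_cast x.den_pos
  have hkey : x * (x.den:ℚ) = (x.num:ℚ) := by
    nth_rewrite 1 [← Rat.num_div_den x]
    exact div_mul_cancel₀ _ hd0.ne'
  have habs : (x.den:ℚ) < |(x.num:ℚ)| := by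
    have h1 : |(x.num:ℚ)| = |x| * (x.den:ℚ) := by
      rw [← hkey, abs_mul, abs_of_pos hd0]
    rw [h1]; nlinarith
  have hlt : (x.den:ℤ) < (x.num.natAbs:ℤ) := by
    have h2 : ((x.den:ℤ):ℚ) < ((|x.num|:ℤ):ℚ) := by push_cast; exact_mod_cast habs
    have h3 : (x.den:ℤ) < |x.num| := by exact_mod_cast h2
    rwa [Int.abs_eq_natAbs] at h3
  have hds : ((x.den:ℤ)).sign = 1 := Int.sign_eq_one_iff_pos.mpr (by exact_mod_cast x.den_pos)
  rcases lt_abs.mp hx with hx1 | hx1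
  · -- 1 < x : x has a positive CF, twist x < 0 does not
    have hnum : 0 < x.num := Rat.num_pos.mpr (by linarith)
    have hs : x.num.sign = 1 := Int.sign_eq_one_iff_pos.mpr hnum
    have hD : x.num.sign * (x.den:ℤ) - (x.num.sign * (x.den:ℤ)).sign * (x.num.natAbs:ℤ) =
        (x.den:ℤ) - x.num.natAbs := by
      rw [hs, one_mul, hds, one_mul]
    have htw : twist x = ((x.num.natAbs:ℤ):ℚ) / (((x.den:ℤ) - x.num.natAbs : ℤ):ℚ) := by
      unfold twist; rw [hD]
    have htwneg : twist x < 0 := by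
      rw [htw]
      apply div_neg_of_pos_of_neg
      · have : (0:ℤ) < (x.num.natAbs:ℤ) := by have := x.den_pos; omega
        exact_mod_cast this
      · have : ((x.den:ℤ) - x.num.natAbs : ℤ) < 0 := by omega
        exact_mod_cast this
    constructor
    · rintro - ⟨L, hL, hv⟩
      have := posCF_ge_one L hL _ hv
      linarith
    · intro _
      exact exists_posCF x.den x le_rfl (le_of_lt hx1)
  · -- x < -1 : twist x ≥ 1 has a positive CF, x does not
    have hxneg : x < -1 := by linarith
    have hnum : x.num < 0 := Rat.num_neg.mpr (by linarith)
    have hs : x.num.sign = -1 := Int.sign_eq_neg_one_iff_neg.mpr hnum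
    have hD : x.num.sign * (x.den:ℤ) - (x.num.sign * (x.den:ℤ)).sign * (x.num.natAbs:ℤ) =
        (x.num.natAbs:ℤ) - x.den := by
      rw [hs, neg_one_mul, Int.sign_neg, hds]
      ring
    have htw : twist x = ((x.num.natAbs:ℤ):ℚ) / (((x.num.natAbs:ℤ) - x.den : ℤ):ℚ) := by
      unfold twist; rw [hD]
    have htwge : 1 ≤ twist x := by
      rw [htw]
      rw [le_div_iff₀ (by exact_mod_cast (by omega : (0:ℤ) < (x.num.natAbs:ℤ) - x.den))]
      have : ((x.num.natAbs:ℤ) - x.den : ℤ) ≤ (x.num.natAbs:ℤ) := by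
        have := x.den_pos; omega
      push_cast
      push_cast at this
      linarith
    constructor
    · rintro ⟨L, hL, hv⟩
      have := posCF_ge_one L hL _ hv
      linarith
    · intro hn
      exact (hn (exists_posCF (twist x).den (twist x) le_rfl htwge)).elim
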